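/- Let H ⊆ Z_2^m be an extended 1-perfect (m, 2^m/(2m), 4) code all of whose codewords have odd weight. Then (1/|H|)·W_H(X+Y, X−Y) = X^m − Y^m. -/

import Mathlib

open Finset Polynomial

namespace Stmt10

lemma sum_pow_wt {R : Type*} [CommRing R] (m : ℕ) (t : R) :
    ∑ x : Fin m → ZMod 2, t ^ hammingNorm x = (1 + t) ^ m := by
  have h1 : ∀ x : Fin m → ZMod 2, t ^ hammingNorm x = ∏ i, (if x i ≠ 0 then t else 1) := by
    intro x
    rw [hammingNorm, Finset.card_filter, ← Finset.prod_pow_eq_pow_sum]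
    exact Finset.prod_congr rfl (fun i _ => by split <;> simp)
  simp_rw [h1]
  rw [← Fintype.prod_sum (fun (_ : Fin m) (b : ZMod 2) => if b ≠ 0 then t else 1)]
  have h2 : (∑ b : ZMod 2, if b ≠ 0 then t else 1) = 1 + t := by
    rw [show (Finset.univ : Finset (ZMod 2)) = {0, 1} from by decide]
    simp
  rw [h2]; exact (Finset.prod_const _).trans (by simp)

variable {m : ℕ}

lemma zmod2_cases (a : ZMod 2) : a = 0 ∨ a = 1 := by revert a; decide

lemma zmod2_add_self (a : ZMod 2) : a + 1 + 1 = a := by revert a; decide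

lemma hammingNorm_eq (c : Fin m → ZMod 2) :
    hammingNorm c = (Finset.univ.filter fun j => c j ≠ 0).card := rfl

lemma wt_flip_zero (c : Fin m → ZMod 2) (i : Fin m) (h : c i = 0) :
    hammingNorm (c + Pi.single i 1) = hammingNorm c + 1 := by
  rw [hammingNorm_eq, hammingNorm_eq]
  have : (Finset.univ.filter fun j => (c + Pi.single i 1 : Fin m → ZMod 2) j ≠ 0)
      = insert i (Finset.univ.filter fun j => c j ≠ 0) := by
    ext j
    by_cases hj : j = i
    · subst hj; simp [h]
    · simp [hj, Pi.single_apply]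
  rw [this, Finset.card_insert_of_notMem (by simp [h])]

lemma wt_flip_one (c : Fin m → ZMod 2) (i : Fin m) (h : c i ≠ 0) :
    hammingNorm (c + Pi.single i 1) + 1 = hammingNorm c := by
  rw [hammingNorm_eq, hammingNorm_eq]
  have h1 : c i = 1 := (zmod2_cases (c i)).resolve_left h
  have : (Finset.univ.filter fun j => (c + Pi.single i 1 : Fin m → ZMod 2) j ≠ 0)
      = (Finset.univ.filter fun j => c j ≠ 0).erase i := by
    ext j
    by_cases hj : j = i
    · subst hj; simp [h1]; decide
    · simp [hj, Pi.single_apply]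
  rw [this, Finset.card_erase_add_one (by simpa using h)]

lemma parity_flip (c : Fin m → ZMod 2) (i : Fin m) :
    Even (hammingNorm (c + Pi.single i 1)) ↔ ¬ Even (hammingNorm c) := by
  by_cases h : c i = 0
  · rw [wt_flip_zero c i h]; simp [Nat.even_add_one]
  · rw [← wt_flip_one c i h]; simp [Nat.even_add_one]

lemma flip_flip (c : Fin m → ZMod 2) (i : Fin m) : c + Pi.single i 1 + Pi.single i 1 = c := by
  funext j
  by_cases hj : j = i
  · subst hj; simp [zmod2_add_self]
  · simp [Pi.single_apply, hj]

lemma card_evens (hm : 0 < m) :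
    (Finset.univ.filter fun x : Fin m → ZMod 2 => Even (hammingNorm x)).card = 2 ^ (m - 1) := by
  classical
  set i0 : Fin m := ⟨0, hm⟩
  have hbij : (Finset.univ.filter fun x : Fin m → ZMod 2 => Even (hammingNorm x)).card
      = (Finset.univ.filter fun x : Fin m → ZMod 2 => ¬ Even (hammingNorm x)).card := by
    apply Finset.card_nbij' (fun x => x + Pi.single i0 1) (fun x => x + Pi.single i0 1)
    · intro x hx
      simp only [Finset.mem_coe, Finset.mem_filter, Finset.mem_univ, true_and] at hx ⊢
      exact fun hcon => (parity_flip x i0).mp hcon hx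
    · intro x hx
      simp only [Finset.mem_coe, Finset.mem_filter, Finset.mem_univ, true_and] at hx ⊢
      exact (parity_flip x i0).mpr hx
    · intro x _; exact flip_flip x i0
    · intro x _; exact flip_flip x i0
  have htot : (Finset.univ.filter fun x : Fin m → ZMod 2 => Even (hammingNorm x)).card
      + (Finset.univ.filter fun x : Fin m → ZMod 2 => ¬ Even (hammingNorm x)).card
      = 2 ^ m := by
    rw [Finset.card_filter_add_card_filter_not]
    simp [Fintype.card_fun]
  have h2 : (2:ℕ) ^ m = 2 * 2 ^ (m-1) := by
    conv_lhs => rw [show m = 1 + (m-1) by omega]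
    rw [pow_add, pow_one]
  omega

lemma norm_single (i : Fin m) : hammingNorm (Pi.single i 1 : Fin m → ZMod 2) = 1 := by
  rw [hammingNorm_eq]
  rw [show (Finset.univ.filter fun j => (Pi.single i 1 : Fin m → ZMod 2) j ≠ 0) = {i} from by
    ext j; by_cases hj : j = i <;> simp [hj, Pi.single_apply]]
  simp

lemma phi_inj (H : Finset (Fin m → ZMod 2))
    (hdist : ∀ u ∈ H, ∀ v ∈ H, u ≠ v → 4 ≤ hammingDist u v) :
    ∀ x ∈ H ×ˢ (Finset.univ : Finset (Fin m)), ∀ y ∈ H ×ˢ Finset.univ,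
      x.1 + Pi.single x.2 1 = y.1 + Pi.single y.2 1 → x = y := by
  rintro ⟨c, i⟩ hci ⟨c', j⟩ hcj heq
  simp only [Finset.mem_product, Finset.mem_univ, and_true] at hci hcj
  have hcc : c = c' := by
    by_contra hne
    have h4 := hdist c hci c' hcj hne
    have h1 : c - c' = Pi.single j 1 - Pi.single i 1 := by
      calc c - c' = (c + Pi.single i 1) - (c' + Pi.single i 1) := by abel
        _ = (c' + Pi.single j 1) - (c' + Pi.single i 1) := by rw [heq]
        _ = Pi.single j 1 - Pi.single i 1 := by abel
    have h2 : hammingDist c c' ≤ 2 := by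
      rw [hammingDist_eq_hammingNorm, show -c + c' = -(Pi.single j 1 : Fin m → ZMod 2) + Pi.single i 1 from by
        rw [neg_add_eq_sub, neg_add_eq_sub, ← neg_sub, h1, neg_sub], ← hammingDist_eq_hammingNorm]
      calc hammingDist (Pi.single j 1 : Fin m → ZMod 2) (Pi.single i 1)
          ≤ hammingDist (Pi.single j 1 : Fin m → ZMod 2) 0 + hammingDist 0 (Pi.single i 1) :=
            hammingDist_triangle _ _ _
        _ = 2 := by rw [hammingDist_zero_right, hammingDist_zero_left, norm_single, norm_single]
    omega
  subst hcc
  have h3 : (Pi.single i 1 : Fin m → ZMod 2) = Pi.single j 1 := by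
    have := add_left_cancel heq
    exact this
  have h4 : i = j := by
    by_contra hij
    have := congrFun h3 i
    rw [Pi.single_eq_same, Pi.single_eq_of_ne hij] at this
    exact one_ne_zero this
  simp [h4]

lemma phi_img (H : Finset (Fin m → ZMod 2)) (hm : 0 < m)
    (hdist : ∀ u ∈ H, ∀ v ∈ H, u ≠ v → 4 ≤ hammingDist u v)
    (hodd : ∀ c ∈ H, Odd (hammingNorm c))
    (hHm : H.card * m = 2 ^ (m - 1)) :
    (H ×ˢ (Finset.univ : Finset (Fin m))).image (fun x => x.1 + Pi.single x.2 1)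
      = Finset.univ.filter fun x : Fin m → ZMod 2 => Even (hammingNorm x) := by
  apply Finset.eq_of_subset_of_card_le
  · rintro x hx
    simp only [Finset.mem_image] at hx
    obtain ⟨⟨c, i⟩, hci, rfl⟩ := hx
    simp only [Finset.mem_product, Finset.mem_univ, and_true] at hci
    simp only [Finset.mem_filter, Finset.mem_univ, true_and]
    exact (parity_flip c i).mpr (Nat.not_even_iff_odd.mpr (hodd c hci))
  · rw [Finset.card_image_of_injOn
      (fun a ha b hb hab => phi_inj H hdist a (by simpa using ha) b (by simpa using hb) hab)]
    rw [Finset.card_product, Finset.card_univ, Fintype.card_fin]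
    rw [card_evens hm, hHm]

lemma sum_evens (H : Finset (Fin m → ZMod 2)) (hm : 0 < m)
    (hdist : ∀ u ∈ H, ∀ v ∈ H, u ≠ v → 4 ≤ hammingDist u v)
    (hodd : ∀ c ∈ H, Odd (hammingNorm c))
    (hHm : H.card * m = 2 ^ (m - 1)) (f : (Fin m → ZMod 2) → Polynomial ℝ) :
    ∑ x ∈ Finset.univ.filter (fun x : Fin m → ZMod 2 => Even (hammingNorm x)), f x
      = ∑ c ∈ H, ∑ i : Fin m, f (c + Pi.single i 1) := by
  rw [← phi_img H hm hdist hodd hHm, Finset.sum_image (phi_inj H hdist), Finset.sum_product]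

lemma innerSumFlip (c : Fin m → ZMod 2) (hw : 1 ≤ hammingNorm c) :
    ∑ i : Fin m, (X : ℝ[X]) ^ hammingNorm (c + Pi.single i 1)
      = (m - hammingNorm c) • (X:ℝ[X]) ^ (hammingNorm c + 1)
        + hammingNorm c • (X:ℝ[X]) ^ (hammingNorm c - 1) := by
  rw [← Finset.sum_filter_add_sum_filter_not Finset.univ (fun i => c i ≠ 0)]
  have hA : ∀ i ∈ Finset.univ.filter (fun i => c i ≠ 0),
      (X:ℝ[X]) ^ hammingNorm (c + Pi.single i 1) = X ^ (hammingNorm c - 1) := by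
    intro i hi
    simp only [Finset.mem_filter] at hi
    have := wt_flip_one c i hi.2
    congr 1
    omega
  have hB : ∀ i ∈ Finset.univ.filter (fun i => ¬ c i ≠ 0),
      (X:ℝ[X]) ^ hammingNorm (c + Pi.single i 1) = X ^ (hammingNorm c + 1) := by
    intro i hi
    simp only [Finset.mem_filter, not_not] at hi
    rw [wt_flip_zero c i hi.2]
  rw [Finset.sum_congr rfl hA, Finset.sum_congr rfl hB, Finset.sum_const, Finset.sum_const]
  have hcard1 : (Finset.univ.filter fun i => c i ≠ 0).card = hammingNorm c :=
    (hammingNorm_eq c).symm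
  have hcard2 : (Finset.univ.filter fun i => ¬ c i ≠ 0).card = m - hammingNorm c := by
    have h1 := Finset.card_filter_add_card_filter_not (s := (Finset.univ : Finset (Fin m)))
      (p := fun i => c i ≠ 0)
    simp only [Finset.card_univ, Fintype.card_fin] at h1
    omega
  rw [hcard1, hcard2, add_comm]

lemma star (H : Finset (Fin m → ZMod 2)) (hm : 0 < m)
    (hdist : ∀ u ∈ H, ∀ v ∈ H, u ≠ v → 4 ≤ hammingDist u v)
    (hodd : ∀ c ∈ H, Odd (hammingNorm c))
    (hHm : H.card * m = 2 ^ (m - 1)) :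
    2 • (∑ c ∈ H, ((m - hammingNorm c) • (X:ℝ[X]) ^ (hammingNorm c + 1)
        + hammingNorm c • (X:ℝ[X]) ^ (hammingNorm c - 1)))
      = (1 + X) ^ m + (1 - X) ^ m := by
  have h1 : ∀ c ∈ H, ((m - hammingNorm c) • (X:ℝ[X]) ^ (hammingNorm c + 1)
      + hammingNorm c • (X:ℝ[X]) ^ (hammingNorm c - 1))
      = ∑ i : Fin m, (X : ℝ[X]) ^ hammingNorm (c + Pi.single i 1) := by
    intro c hc
    exact (innerSumFlip c ((hodd c hc).pos)).symm
  rw [Finset.sum_congr rfl h1, ← sum_evens H hm hdist hodd hHm (fun x => (X:ℝ[X]) ^ hammingNorm x)]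
  have h2 : ∑ x : Fin m → ZMod 2, ((X:ℝ[X]) ^ hammingNorm x + (-X) ^ hammingNorm x)
      = (1 + X) ^ m + (1 - X) ^ m := by
    rw [Finset.sum_add_distrib, sum_pow_wt m (X:ℝ[X]), sum_pow_wt m (-X:ℝ[X]), ← sub_eq_add_neg]
  rw [← h2]
  have h3 : ∀ x : Fin m → ZMod 2, (X:ℝ[X]) ^ hammingNorm x + (-X) ^ hammingNorm x
      = if Even (hammingNorm x) then 2 • ((X:ℝ[X]) ^ hammingNorm x) else 0 := by
    intro x
    split_ifs with h
    · rw [h.neg_pow, two_smul]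
    · rw [(Nat.not_even_iff_odd.mp h).neg_pow]
      ring
  rw [Finset.sum_congr rfl (fun x _ => h3 x), ← Finset.sum_filter]
  rw [Finset.smul_sum]

lemma term_eq (m w : ℕ) (h1 : 1 ≤ w) (hwm : w ≤ m) :
    (1 - X^2) * (C (w:ℝ) * X^(w-1)) + (m:ℝ[X]) * X * X^w
      = (m - w) • (X:ℝ[X])^(w+1) + w • (X:ℝ[X])^(w-1) := by
  obtain ⟨k, rfl⟩ : ∃ k, w = k + 1 := ⟨w - 1, by omega⟩
  simp only [Nat.add_sub_cancel, nsmul_eq_mul]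
  rw [Nat.cast_sub hwm]
  simp only [map_add, map_one, map_natCast]
  push_cast
  ring

lemma ode_q (hm : 1 ≤ m) :
    (1 - X^2) * derivative ((1+X)^m - (1-X)^m) + (m:ℝ[X]) * X * ((1+X)^m - (1-X)^m)
      = (m:ℝ[X]) * ((1+X)^m + (1-X)^m) := by
  obtain ⟨n, rfl⟩ : ∃ n, m = n + 1 := ⟨m - 1, by omega⟩
  rw [derivative_sub, derivative_pow, derivative_pow]
  simp only [Nat.add_sub_cancel, derivative_add, derivative_sub, derivative_one,
    derivative_X, zero_add, zero_sub, mul_one, mul_neg]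
  simp only [map_add, map_one, map_natCast]
  push_cast
  ring

lemma h_zero (h : ℝ[X]) (hE : (1 - X^2) * derivative h + (m:ℝ[X]) * X * h = 0)
    (h0 : h.coeff 0 = 0) : h = 0 := by
  have hc : (m : ℝ[X]) = C (m:ℝ) := (map_natCast (C : ℝ →+* ℝ[X]) m).symm
  rw [hc] at hE
  have hE2 : derivative h + C (m:ℝ) * (h * X^1) = derivative h * X^2 := by
    linear_combination hE
  have rel : ∀ n : ℕ, h.coeff (n+1) * (n+1)
      + (m:ℝ) * (if 1 ≤ n then h.coeff (n-1) else 0)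
      = if 2 ≤ n then h.coeff (n-2+1) * ((n-2 : ℕ)+1 : ℝ) else 0 := by
    intro n
    have h3 := congrArg (fun r : ℝ[X] => r.coeff n) hE2
    simp only [coeff_add, coeff_C_mul, coeff_mul_X_pow', coeff_derivative] at h3
    convert h3 using 2
  have claim : ∀ n, h.coeff n = 0 := by
    intro n
    induction n using Nat.strong_induction_on with
    | _ n ih =>
      match n with
      | 0 => exact h0
      | (k+1) =>
        have hr := rel k
        have hz : (if 1 ≤ k then h.coeff (k-1) else 0) = 0 := by
          split_ifs with hk
          · exact ih _ (by omega)
          · rfl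
        have hz2 : (if 2 ≤ k then h.coeff (k-2+1) * ((k-2 : ℕ)+1 : ℝ) else 0) = 0 := by
          split_ifs with hk
          · rw [ih (k-2+1) (by omega)]; ring
          · rfl
        rw [hz, hz2] at hr
        have hcoe : h.coeff (k+1) * ((k:ℝ)+1) = 0 := by linarith
        exact (mul_eq_zero.mp hcoe).resolve_right (by positivity)
  exact Polynomial.ext fun n => by rw [claim n, coeff_zero]

lemma key_eval (H : Finset (Fin m → ZMod 2)) (hm : 0 < m)
    (hdist : ∀ u ∈ H, ∀ v ∈ H, u ≠ v → 4 ≤ hammingDist u v)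
    (hodd : ∀ c ∈ H, Odd (hammingNorm c))
    (hHm : H.card * m = 2 ^ (m - 1)) :
    ∀ t : ℝ, (2*(m:ℝ)) * ∑ c ∈ H, t ^ hammingNorm c = (1+t)^m - (1-t)^m := by
  set p : ℝ[X] := ∑ c ∈ H, X ^ hammingNorm c with hp
  set q : ℝ[X] := (1+X)^m - (1-X)^m with hq
  set S : ℝ[X] := ∑ c ∈ H, ((m - hammingNorm c) • (X:ℝ[X]) ^ (hammingNorm c + 1)
      + hammingNorm c • (X:ℝ[X]) ^ (hammingNorm c - 1)) with hS
  have hb : ∀ c ∈ H, 1 ≤ hammingNorm c ∧ hammingNorm c ≤ m := fun c hc =>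
    ⟨(hodd c hc).pos, le_trans hammingNorm_le_card_fintype (by simp)⟩
  have e1 : (1 - X^2) * derivative p + (m:ℝ[X]) * X * p = S := by
    rw [hp, hS, map_sum derivative _ H, Finset.mul_sum, Finset.mul_sum,
      ← Finset.sum_add_distrib]
    refine Finset.sum_congr rfl fun c hc => ?_
    rw [derivative_X_pow]
    exact term_eq m _ (hb c hc).1 (hb c hc).2
  have e2 := ode_q (m := m) (by omega)
  have e3 : 2 • S = (1 + X) ^ m + (1 - X) ^ m := star H hm hdist hodd hHm
  have e3' : (2:ℝ[X]) * S = (1+X)^m + (1-X)^m := by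
    rw [← e3, two_smul, two_mul]
  have hEh : (1 - X^2) * derivative (C (2*(m:ℝ)) * p - q) + (m:ℝ[X]) * X * (C (2*(m:ℝ)) * p - q)
      = 0 := by
    rw [derivative_sub, derivative_C_mul]
    have hC : C (2*(m:ℝ)) = 2 * (m:ℝ[X]) := by
      rw [map_mul, map_natCast, map_ofNat]
    rw [hC]
    linear_combination (2 * ((m:ℕ):ℝ[X])) * e1 - e2 + ((m:ℕ):ℝ[X]) * e3'
  have h0 : (C (2*(m:ℝ)) * p - q).coeff 0 = 0 := by
    rw [coeff_sub, coeff_C_mul]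
    have hp0 : p.coeff 0 = 0 := by
      rw [hp, Polynomial.finset_sum_coeff]
      apply Finset.sum_eq_zero
      intro c hc
      rw [coeff_X_pow, if_neg (by have := (hb c hc).1; omega)]
    have hq0 : q.coeff 0 = 0 := by
      rw [hq, coeff_zero_eq_eval_zero]
      simp
    rw [hp0, hq0]; ring
  have hzero := h_zero _ hEh h0
  have hpq : C (2*(m:ℝ)) * p = q := by rwa [sub_eq_zero] at hzero
  intro t
  have hev := congrArg (eval t) hpq
  simp only [hp, hq, eval_mul, eval_C, eval_finset_sum, eval_pow, eval_X, eval_sub, eval_add,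
    eval_one] at hev
  exact hev

end Stmt10

/-- MacWilliams transform of an extended 1-perfect `(m, 2^m/(2m), 4)` code all of
whose codewords have odd weight: with `m = 2^μ`, `(1/|H|)·W_H(X+Y, X−Y) = X^m − Y^m`. -/
theorem stmt_10 (μ : ℕ) (hμ : 2 ≤ μ)
    (H : Finset (Fin (2 ^ μ) → ZMod 2))
    (hcard : H.card = 2 ^ (2 ^ μ) / (2 * 2 ^ μ))
    (hdist : ∀ u ∈ H, ∀ v ∈ H, u ≠ v → 4 ≤ hammingDist u v)
    (hodd : ∀ c ∈ H, Odd (hammingNorm c)) :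
    ∀ X Y : ℝ,
      (H.card : ℝ)⁻¹ *
          ∑ c ∈ H, (X + Y) ^ (2 ^ μ - hammingNorm c) * (X - Y) ^ (hammingNorm c)
        = X ^ (2 ^ μ) - Y ^ (2 ^ μ) := by
  intro X Y
  have hμ2 : μ + 1 ≤ 2 ^ μ := by
    have := Nat.lt_two_pow_self (n := μ)
    omega
  have hm : 0 < 2 ^ μ := Nat.pow_pos (by norm_num)
  have hmeven : Even (2 ^ μ) := by
    refine (Nat.even_pow' (by omega)).mpr (by norm_num)
  have hcard' : H.card = 2 ^ (2 ^ μ - (μ + 1)) := by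
    rw [hcard, show 2 * 2 ^ μ = 2 ^ (μ + 1) from by ring, Nat.pow_div hμ2 (by norm_num)]
  have hHm : H.card * 2 ^ μ = 2 ^ (2 ^ μ - 1) := by
    rw [hcard', ← pow_add]
    congr 1
    omega
  have hN : H.card * (2 * 2 ^ μ) = 2 ^ (2 ^ μ) := by
    rw [hcard', show 2 * 2 ^ μ = 2 ^ (μ + 1) from by ring, ← pow_add]
    congr 1
    omega
  have hb : ∀ c ∈ H, 1 ≤ hammingNorm c ∧ hammingNorm c ≤ 2 ^ μ := fun c hc =>
    ⟨(hodd c hc).pos, le_trans hammingNorm_le_card_fintype (by simp)⟩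
  have hcard0 : (H.card : ℝ) ≠ 0 := by
    rw [hcard']
    positivity
  by_cases hs : X + Y = 0
  · have hY : Y = -X := by linarith
    have hterm : ∀ c ∈ H, (X+Y)^(2^μ - hammingNorm c) * (X-Y)^(hammingNorm c) = 0 := by
      intro c hc
      have hwne : hammingNorm c ≠ 2 ^ μ := by
        intro hcon
        rw [← hcon] at hmeven
        exact (Nat.not_even_iff_odd.mpr (hodd c hc)) hmeven
      rw [hs, zero_pow (by have := (hb c hc).2; omega), zero_mul]
    rw [Finset.sum_eq_zero hterm, mul_zero, hY, hmeven.neg_pow]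
    ring
  · have hkey := Stmt10.key_eval H hm hdist hodd hHm ((X-Y)/(X+Y))
    have h1r : 1 + (X-Y)/(X+Y) = 2*X/(X+Y) := by field_simp; ring
    have h2r : 1 - (X-Y)/(X+Y) = 2*Y/(X+Y) := by field_simp; ring
    rw [h1r, h2r] at hkey
    have hw : ∀ c ∈ H, (X+Y)^(2^μ - hammingNorm c) * (X-Y)^(hammingNorm c)
        = (X+Y)^(2^μ) * ((X-Y)/(X+Y))^(hammingNorm c) := by
      intro c hc
      rw [div_pow, show (X+Y)^(2^μ) = (X+Y)^(2^μ - hammingNorm c) * (X+Y)^(hammingNorm c) from by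
        rw [← pow_add]; congr 1; have := (hb c hc).2; omega]
      have hyw : (X+Y)^(hammingNorm c) ≠ 0 := pow_ne_zero _ hs
      field_simp
    rw [Finset.sum_congr rfl hw, ← Finset.mul_sum]
    have h2m : (2*((2^μ : ℕ):ℝ)) ≠ 0 := by positivity
    have hSig : ∑ c ∈ H, ((X-Y)/(X+Y))^(hammingNorm c)
        = ((2*X/(X+Y))^(2^μ) - (2*Y/(X+Y))^(2^μ)) / (2*((2^μ : ℕ):ℝ)) := by
      rw [eq_div_iff h2m]
      linarith [hkey]
    rw [hSig, div_pow, div_pow]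
    have hNr : ((H.card:ℝ)) * (2 * ((2^μ:ℕ):ℝ)) = 2^(2^μ:ℕ) := by
      exact_mod_cast congrArg (Nat.cast : ℕ → ℝ) hN
    have hxp : (X+Y)^(2^μ) ≠ 0 := pow_ne_zero _ hs
    field_simp
    rw [mul_pow, mul_pow]
    push_cast at hNr ⊢
    linear_combination (-(X^(2^μ) - Y^(2^μ))) * hNr
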